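/- Let S be a finite set with |S| = n ≥ 3 and let 2 ≤ r ≤ n − 1. Let 𝓒 be a collection of r-subsets of S such that any two distinct X, Y ∈ 𝓒 satisfy |X ∩ Y| ≤ r − 2. Then there exists a matroid M on S of rank r whose set of bases is exactly the set of r-subsets of S not belonging to 𝓒. -/

import Mathlib

open Set

namespace Matroid

variable {α : Type*}

/-- A circuit of a matroid: a minimal dependent set. -/
def Circuit' (M : Matroid α) (C : Set α) : Prop :=
  M.Dep C ∧ ∀ D, D ⊂ C → M.Indep D

/-- The rank of a subset `X`: the maximum cardinality of an independent subset of `X`. -/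
noncomputable def rk' (M : Matroid α) (X : Set α) : ℕ :=
  sSup {n | ∃ I, I ⊆ X ∧ M.Indep I ∧ I.ncard = n}

/-- A hyperplane of a matroid of rank `r`: a maximal subset of the ground set of rank `r - 1`. -/
def Hyperplane' (M : Matroid α) (H : Set α) : Prop :=
  H ⊆ M.E ∧ M.rk' H = M.rk' M.E - 1 ∧
    ∀ Y, H ⊂ Y → Y ⊆ M.E → M.rk' Y ≠ M.rk' M.E - 1

/-- A matroid is paving if it has no circuits of cardinality less than its rank. -/
def Paving (M : Matroid α) : Prop :=
  ∀ C, M.Circuit' C → M.rk' M.E ≤ C.ncard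

/-- A matroid is sparse-paving if both it and its dual are paving. -/
def SparsePaving (M : Matroid α) : Prop :=
  M.Paving ∧ M✶.Paving

end Matroid

theorem stmt6 {α : Type*} (S : Set α) (hS : S.Finite) (n r : ℕ) (hn : S.ncard = n)
    (hn3 : 3 ≤ n) (hr2 : 2 ≤ r) (hrn : r ≤ n - 1)
    (C : Set (Set α)) (hsub : ∀ X ∈ C, X ⊆ S ∧ X.ncard = r)
    (hint : ∀ X ∈ C, ∀ Y ∈ C, X ≠ Y → (X ∩ Y).ncard ≤ r - 2) :
    ∃ M : Matroid α, M.E = S ∧ M.rk' M.E = r ∧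
      (∀ B, M.IsBase B ↔ (B ⊆ S ∧ B.ncard = r ∧ B ∉ C)) := by
  classical
  set Ind : Set α → Prop := fun I => I ⊆ S ∧ I.ncard ≤ r ∧ I ∉ C with hInd
  -- a set in C has card r
  have hCcard : ∀ X ∈ C, X.ncard = r := fun X hX => (hsub X hX).2
  -- existence of an r-subset of S not in C
  have hr1n : r + 1 ≤ n := by omega
  obtain ⟨T, hTS, hT⟩ := Set.exists_subset_card_eq (s := S) (n := r + 1) (by omega)
  have hTfin : T.Finite := hS.subset hTS
  have hTne : 2 ≤ T.ncard := by omega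
  obtain ⟨a, ha, b, hb, hab⟩ : ∃ a ∈ T, ∃ b ∈ T, a ≠ b := by
    have : 1 < T.ncard := by omega
    rw [Set.one_lt_ncard_iff hTfin] at this
    obtain ⟨a, b, ha, hb, hab⟩ := this
    exact ⟨a, ha, b, hb, hab⟩
  have hcard_da : (T \ {a}).ncard = r := by
    rw [Set.ncard_diff_singleton_of_mem ha, hT]; omega
  have hcard_db : (T \ {b}).ncard = r := by
    rw [Set.ncard_diff_singleton_of_mem hb, hT]; omega
  have hKex : ∃ K, K ⊆ S ∧ K.ncard = r ∧ K ∉ C := by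
    by_cases hA : T \ {a} ∈ C
    · refine ⟨T \ {b}, (Set.diff_subset).trans hTS, hcard_db, fun hB => ?_⟩
      have hne : T \ {a} ≠ T \ {b} := by
        intro h
        have : b ∈ T \ {a} := ⟨hb, fun hba => hab ((Set.mem_singleton_iff.mp hba).symm)⟩
        rw [h] at this
        exact this.2 rfl
      have := hint _ hA _ hB hne
      have hinter : (T \ {a}) ∩ (T \ {b}) = T \ {a, b} := by
        ext x; simp [Set.mem_diff, Set.mem_inter_iff]; tauto
      rw [hinter] at this
      have hcard2 : ({a, b} : Set α).ncard = 2 := Set.ncard_pair hab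
      have hsubab : ({a, b} : Set α) ⊆ T := by
        intro x hx; rcases hx with h | h <;> simp_all
      have : (T \ ({a, b} : Set α)).ncard = r - 1 := by
        rw [Set.ncard_diff hsubab (Set.toFinite _), hcard2, hT]; omega
      omega
    · exact ⟨T \ {a}, (Set.diff_subset).trans hTS, hcard_da, hA⟩
  obtain ⟨K, hKS, hKr, hKC⟩ := hKex
  -- independence axioms
  have indep_empty : Ind ∅ := by
    refine ⟨Set.empty_subset _, by simp, fun h => ?_⟩
    have := hCcard _ h
    simp at this; omega
  have indep_subset : ∀ ⦃I J : Set α⦄, Ind J → I ⊆ J → Ind I := by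
    rintro I J ⟨hJS, hJr, hJC⟩ hIJ
    have hJfin : J.Finite := hS.subset hJS
    refine ⟨hIJ.trans hJS, (Set.ncard_le_ncard hIJ hJfin).trans hJr, fun hIC => ?_⟩
    have hIr : I.ncard = r := hCcard _ hIC
    have : I = J := Set.eq_of_subset_of_ncard_le hIJ (by omega) hJfin
    exact hJC (this ▸ hIC)
  have indep_aug : ∀ ⦃I J : Set α⦄, Ind I → Ind J → I.ncard < J.ncard →
      ∃ e ∈ J, e ∉ I ∧ Ind (insert e I) := by
    rintro I J ⟨hIS, hIr, hIC⟩ ⟨hJS, hJr, hJC⟩ hlt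
    have hIfin : I.Finite := hS.subset hIS
    have hJfin : J.Finite := hS.subset hJS
    have hins : ∀ e ∈ J, e ∉ I → (insert e I).ncard = I.ncard + 1 := by
      intro e _ heI
      exact Set.ncard_insert_of_notMem heI hIfin
    by_cases hcase : I.ncard + 1 < r
    · obtain ⟨e, heJ, heI⟩ := Set.exists_mem_notMem_of_ncard_lt_ncard hlt hIfin
      refine ⟨e, heJ, heI, insert_subset (hJS heJ) hIS, by
        rw [hins e heJ heI]; omega, fun hC' => ?_⟩
      have := hCcard _ hC'
      rw [hins e heJ heI] at this; omega
    · -- I.ncard + 1 = r, J.ncard = r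
      have hIcard : I.ncard + 1 = r := by omega
      have hJcard : J.ncard = r := by omega
      by_contra hcon
      push_neg at hcon
      have hinsC : ∀ e ∈ J, e ∉ I → insert e I ∈ C := by
        intro e heJ heI
        by_contra hC'
        exact hcon e heJ heI ⟨insert_subset (hJS heJ) hIS,
          by rw [hins e heJ heI]; omega, hC'⟩
      obtain ⟨e, heJ, heI⟩ := Set.exists_mem_notMem_of_ncard_lt_ncard hlt hIfin
      by_cases hJsub : J ⊆ insert e I
      · have hinscard : (insert e I).ncard = r := by rw [hins e heJ heI]; omega
        have : J = insert e I := Set.eq_of_subset_of_ncard_le hJsub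
          (by rw [hinscard, hJcard]) (hIfin.insert e)
        exact hJC (this ▸ hinsC e heJ heI)
      · obtain ⟨f, hfJ, hfI⟩ := not_subset.mp hJsub
        have hfe : f ≠ e := fun h => hfI (h ▸ Set.mem_insert e I)
        have hfI' : f ∉ I := fun h => hfI (Set.mem_insert_of_mem e h)
        have hXC := hinsC e heJ heI
        have hYC := hinsC f hfJ hfI'
        have hXY : insert e I ≠ insert f I := by
          intro h
          have : e ∈ insert f I := h ▸ Set.mem_insert e I
          rcases this with h' | h'
          · exact hfe h'.symm
          · exact heI h'
        have hle := hint _ hXC _ hYC hXY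
        have hIsub : I ⊆ insert e I ∩ insert f I :=
          subset_inter (Set.subset_insert e I) (Set.subset_insert f I)
        have hfin' : (insert e I ∩ insert f I).Finite := (hIfin.insert e).inter_of_left _
        have := Set.ncard_le_ncard hIsub hfin'
        omega
  -- construct the matroid
  set M : Matroid α := (IndepMatroid.ofFinite hS Ind indep_empty indep_subset indep_aug
    (fun I hI => hI.1)).matroid with hM
  have hME : M.E = S := rfl
  have hMIndep : ∀ I, M.Indep I ↔ Ind I := by
    intro I
    rw [hM]
    simp [IndepMatroid.ofFinite]
  have hKInd : Ind K := ⟨hKS, hKr.le, hKC⟩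
  -- base characterization
  have hbase : ∀ B, M.IsBase B ↔ (B ⊆ S ∧ B.ncard = r ∧ B ∉ C) := by
    intro B
    rw [Matroid.isBase_iff_maximal_indep]
    constructor
    · rintro ⟨hBi, hBmax⟩
      obtain ⟨hBS, hBr, hBC⟩ := (hMIndep B).mp hBi
      refine ⟨hBS, ?_, hBC⟩
      by_contra hne
      have hlt : B.ncard < K.ncard := by omega
      obtain ⟨e, heK, heB, hins⟩ := indep_aug ((hMIndep B).mp hBi) hKInd hlt
      have := hBmax ((hMIndep _).mpr hins) (Set.subset_insert e B)
      exact heB (this (Set.mem_insert e B))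
    · rintro ⟨hBS, hBr, hBC⟩
      refine ⟨(hMIndep B).mpr ⟨hBS, hBr.le, hBC⟩, fun Y hY hBY => ?_⟩
      obtain ⟨hYS, hYr, hYC⟩ := (hMIndep Y).mp hY
      exact (Set.eq_of_subset_of_ncard_le hBY (by omega) (hS.subset hYS)).symm.subset
  -- rank
  refine ⟨M, hME, ?_, hbase⟩
  have hset : ∀ m ∈ {m | ∃ I, I ⊆ M.E ∧ M.Indep I ∧ I.ncard = m}, m ≤ r := by
    rintro m ⟨I, hIE, hIi, rfl⟩
    exact ((hMIndep I).mp hIi).2.1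
  have hmem : r ∈ {m | ∃ I, I ⊆ M.E ∧ M.Indep I ∧ I.ncard = m} :=
    ⟨K, hKS, (hMIndep K).mpr hKInd, hKr⟩
  rw [Matroid.rk']
  exact le_antisymm (csSup_le ⟨r, hmem⟩ hset) (le_csSup ⟨r, hset⟩ hmem)
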